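/- Let 𝒳 be a finite set, C : 𝒳×𝒳 → [0,∞) symmetric, ω a probability measure on 𝒳, and ϖ a finite symmetric measure on 𝒳×𝒳. Then (1/2)·sup_g { Σ_{a,b} ϖ(a,b)g(a,b) + Σ_{a,b} C(a,b)ω(a)ω(b)(1 − e^{g(a,b)}) } = (1/2)·𝔥_C(ϖ‖ω), where the supremum is over all symmetric functions g : 𝒳×𝒳 → ℝ and both sides take values in [0,∞]. -/

import Mathlib

open Filter Topology

namespace ColoredLDP

noncomputable section

/-- Extended logarithm: `⊥` at nonpositive arguments. -/
def elog (x : ℝ) : EReal := if x ≤ 0 then (⊥ : EReal) else ((Real.log x : ℝ) : EReal)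

open Classical in
/-- Relative entropy of finite measures on a finite set, with value `⊤` if
absolute continuity fails. -/
def relEntFin {Y : Type} [Fintype Y] (ν ρ : Y → ℝ) : EReal :=
  if ∀ y, ρ y = 0 → ν y = 0 then (((∑ y, ν y * Real.log (ν y / ρ y)) : ℝ) : EReal)
  else (⊤ : EReal)

open Classical in
/-- Relative entropy of measures on a countable set, with value `⊤` if absolute
continuity fails or the defining series is not (absolutely) summable. -/
def relEntC {Y : Type} (ν ρ : Y → ℝ) : EReal :=
  if (∀ y, ρ y = 0 → ν y = 0) ∧ Summable (fun y => ν y * Real.log (ν y / ρ y)) then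
    (((∑' y, ν y * Real.log (ν y / ρ y)) : ℝ) : EReal)
  else (⊤ : EReal)

variable {𝒳 : Type} [Fintype 𝒳] [DecidableEq 𝒳]

/-- `𝔥_C(ϖ‖ω) = H(ϖ‖Cω⊗ω) + ‖Cω⊗ω‖ − ‖ϖ‖`. -/
def hC (C : 𝒳 → 𝒳 → ℝ) (ϖ : 𝒳 → 𝒳 → ℝ) (ω : 𝒳 → ℝ) : EReal :=
  relEntFin (fun q : 𝒳 × 𝒳 => ϖ q.1 q.2) (fun q : 𝒳 × 𝒳 => C q.1 q.2 * ω q.1 * ω q.2)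
    + (((∑ a, ∑ b, C a b * ω a * ω b) : ℝ) : EReal) - (((∑ a, ∑ b, ϖ a b) : ℝ) : EReal)

/-- A probability mass function. -/
def IsPMF {Y : Type} (ν : Y → ℝ) : Prop := (∀ y, 0 ≤ ν y) ∧ HasSum ν 1

/-- The `𝒳`-marginal `ν₁` of a measure on `𝒳 × ℕ^𝒳`. -/
def marg (ν : 𝒳 × (𝒳 → ℕ) → ℝ) (a : 𝒳) : ℝ := ∑' ℓ : 𝒳 → ℕ, ν (a, ℓ)

/-- The measure `⟨ν(·,ℓ), ℓ(·)⟩`, the second component of `Φ(ν)`. -/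
def pairOf (ν : 𝒳 × (𝒳 → ℕ) → ℝ) (a b : 𝒳) : ℝ := ∑' ℓ : 𝒳 → ℕ, ν (a, ℓ) * (ℓ b : ℝ)

/-- Sub-consistency of a pair `(ϖ, ν)`. -/
def SubConsistent (ϖ : 𝒳 → 𝒳 → ℝ) (ν : 𝒳 × (𝒳 → ℕ) → ℝ) : Prop :=
  ∀ a b : 𝒳, (∑' ℓ : 𝒳 → ℕ, ENNReal.ofReal (ν (a, ℓ) * (ℓ b : ℝ))) ≤ ENNReal.ofReal (ϖ a b)

/-- The measure with colour law `ω` under which the neighbourhood counts are independent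
Poisson variables with means `ϖ(a,b)/ω(a)`; `Q[ϖ,ν]` is `Qof ϖ ν₁`. -/
def Qof (ϖ : 𝒳 → 𝒳 → ℝ) (ω : 𝒳 → ℝ) (x : 𝒳 × (𝒳 → ℕ)) : ℝ :=
  ω x.1 * ∏ b : 𝒳,
    Real.exp (-(ϖ x.1 b / ω x.1)) * (ϖ x.1 b / ω x.1) ^ (x.2 b) / (Nat.factorial (x.2 b) : ℝ)

/-- The set of possible (ordered) edges on `n` vertices. -/
abbrev Edge (n : ℕ) := {e : Fin n × Fin n // e.1 < e.2}

/-- A coloured graph on `n` vertices: a colouring together with an edge set. -/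
abbrev Config (𝒳 : Type) (n : ℕ) := (Fin n → 𝒳) × Finset (Edge n)

/-- The probability weight of a configuration under the coloured random graph law. -/
def wt {n : ℕ} (μ : 𝒳 → ℝ) (p : 𝒳 → 𝒳 → ℝ) (x : Config 𝒳 n) : ℝ :=
  (∏ v, μ (x.1 v)) *
    ∏ e : Edge n,
      if e ∈ x.2 then p (x.1 e.1.1) (x.1 e.1.2) else 1 - p (x.1 e.1.1) (x.1 e.1.2)

/-- The law of the coloured random graph, evaluated on an event. -/
def graphP (𝒳 : Type) [Fintype 𝒳] [DecidableEq 𝒳] (n : ℕ) (μ : 𝒳 → ℝ) (p : 𝒳 → 𝒳 → ℝ)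
    (A : Set (Config 𝒳 n)) : ℝ :=
  ∑ x : Config 𝒳 n, A.indicator (wt μ p) x

/-- Conditional probability for the coloured random graph. -/
def condP (𝒳 : Type) [Fintype 𝒳] [DecidableEq 𝒳] (n : ℕ) (μ : 𝒳 → ℝ) (p : 𝒳 → 𝒳 → ℝ)
    (A B : Set (Config 𝒳 n)) : ℝ :=
  graphP 𝒳 n μ p (A ∩ B) / graphP 𝒳 n μ p B

/-- Conditional expectation for the coloured random graph. -/
def condE (𝒳 : Type) [Fintype 𝒳] [DecidableEq 𝒳] (n : ℕ) (μ : 𝒳 → ℝ) (p : 𝒳 → 𝒳 → ℝ)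
    (f : Config 𝒳 n → ℝ) (B : Set (Config 𝒳 n)) : ℝ :=
  (∑ x : Config 𝒳 n, B.indicator (fun x => wt μ p x * f x) x) / graphP 𝒳 n μ p B

/-- The empirical colour measure `L¹`. -/
def empColor {n : ℕ} (x : Config 𝒳 n) (a : 𝒳) : ℝ :=
  ((Finset.univ.filter (fun v : Fin n => x.1 v = a)).card : ℝ) / n

/-- The empirical pair measure `L²`. -/
def empPair {n : ℕ} (x : Config 𝒳 n) (a b : 𝒳) : ℝ :=
  (∑ e ∈ x.2, ((if x.1 e.1.1 = a ∧ x.1 e.1.2 = b then (1:ℝ) else 0) +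
    (if x.1 e.1.2 = a ∧ x.1 e.1.1 = b then (1:ℝ) else 0))) / n

/-- The number of neighbours of `v` of colour `b`. -/
def locDeg {n : ℕ} (x : Config 𝒳 n) (v : Fin n) (b : 𝒳) : ℕ :=
  (x.2.filter (fun e => (e.1.1 = v ∧ x.1 e.1.2 = b) ∨ (e.1.2 = v ∧ x.1 e.1.1 = b))).card

/-- The empirical neighbourhood measure `M`. -/
def empNbhd {n : ℕ} (x : Config 𝒳 n) (y : 𝒳 × (𝒳 → ℕ)) : ℝ :=
  ((Finset.univ.filter (fun v : Fin n =>
      x.1 v = y.1 ∧ (fun b => locDeg x v b) = y.2)).card : ℝ) / n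

/-- Total variation distance between measures on `𝒳 × ℕ^𝒳`. -/
def dTV (ν ν' : 𝒳 × (𝒳 → ℕ) → ℝ) : ℝ := (1 / 2) * ∑' y, |ν y - ν' y|

end
end ColoredLDP

namespace ColoredLDP

/-- Pointwise Legendre bound. -/
lemma key_ineq (w r t : ℝ) (hw : 0 ≤ w) (hr : 0 ≤ r) (hac : r = 0 → w = 0) :
    w * t + r * (1 - Real.exp t) ≤ w * Real.log (w / r) + r - w := by
  rcases hr.eq_or_lt with hr0 | hrpos
  · have hw0 : w = 0 := hac hr0.symm
    simp [hw0, ← hr0]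
  rcases hw.eq_or_lt with hw0 | hwpos
  · have := Real.exp_pos t
    simp only [← hw0]
    nlinarith
  · have hdiv : (0:ℝ) < w / r := div_pos hwpos hrpos
    have h1 := Real.add_one_le_exp (t - Real.log (w / r))
    rw [Real.exp_sub, Real.exp_log hdiv] at h1
    rw [div_div_eq_mul_div, le_div_iff₀ hwpos] at h1
    have := Real.exp_pos t
    nlinarith

/-- Lemma 3.2(i): the Legendre-type variational formula for `(1/2)𝔥_C(ϖ‖ω)`. -/
theorem legendre_hC (𝒳 : Type) [Fintype 𝒳] [DecidableEq 𝒳]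
    (C : 𝒳 → 𝒳 → ℝ) (hC0 : ∀ a b, 0 ≤ C a b) (hCsym : ∀ a b, C a b = C b a)
    (ϖ : 𝒳 → 𝒳 → ℝ) (hϖ0 : ∀ a b, 0 ≤ ϖ a b) (hϖsym : ∀ a b, ϖ a b = ϖ b a)
    (ω : 𝒳 → ℝ) (hω0 : ∀ a, 0 ≤ ω a) (hω1 : ∑ a, ω a = 1) :
    (((1 : ℝ) / 2 : ℝ) : EReal) *
        (⨆ g : {g : 𝒳 → 𝒳 → ℝ // ∀ a b, g a b = g b a},
          (((∑ a, ∑ b, ϖ a b * g.1 a b +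
              ∑ a, ∑ b, C a b * ω a * ω b * (1 - Real.exp (g.1 a b))) : ℝ) : EReal)) =
      (((1 : ℝ) / 2 : ℝ) : EReal) * hC C ϖ ω := by
  have hP0 : ∀ a b, (0:ℝ) ≤ C a b * ω a * ω b :=
    fun a b => mul_nonneg (mul_nonneg (hC0 a b) (hω0 a)) (hω0 b)
  have hPsym : ∀ a b, C a b * ω a * ω b = C b a * ω b * ω a := fun a b => by rw [hCsym]; ring
  congr 1
  by_cases hac : ∀ q : 𝒳 × 𝒳, C q.1 q.2 * ω q.1 * ω q.2 = 0 → ϖ q.1 q.2 = 0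
  · -- absolutely continuous case
    set H : ℝ := ∑ a, ∑ b,
        (ϖ a b * Real.log (ϖ a b / (C a b * ω a * ω b)) + C a b * ω a * ω b - ϖ a b) with hH
    have hRHS : hC C ϖ ω = (H : EReal) := by
      rw [hC, relEntFin, if_pos hac, ← EReal.coe_add, ← EReal.coe_sub]
      norm_cast
      rw [Fintype.sum_prod_type, hH]
      simp only [Finset.sum_add_distrib, Finset.sum_sub_distrib]
    rw [hRHS]
    apply le_antisymm
    · apply iSup_le
      intro g
      apply EReal.coe_le_coe_iff.mpr
      rw [hH, ← Finset.sum_add_distrib]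
      apply Finset.sum_le_sum; intro a _
      rw [← Finset.sum_add_distrib]
      apply Finset.sum_le_sum; intro b _
      exact key_ineq _ _ _ (hϖ0 a b) (hP0 a b) (fun h => hac (a, b) h)
    · set S : ℝ := ∑ a, ∑ b, (if ϖ a b = 0 then C a b * ω a * ω b else 0) with hS
      set gfun : ℕ → 𝒳 → 𝒳 → ℝ := fun n a b =>
          if ϖ a b = 0 then -(n : ℝ) else Real.log (ϖ a b / (C a b * ω a * ω b)) with hgfun
      have hgsym : ∀ n a b, gfun n a b = gfun n b a := by
        intro n a b
        rw [hgfun]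
        simp only
        rw [hϖsym a b, hPsym a b]
      have hval : ∀ n : ℕ,
          (∑ a, ∑ b, ϖ a b * gfun n a b +
            ∑ a, ∑ b, C a b * ω a * ω b * (1 - Real.exp (gfun n a b)))
          = H - S * Real.exp (-(n : ℝ)) := by
        intro n
        have hRe : H - S * Real.exp (-(n : ℝ)) = ∑ a, ∑ b,
            ((ϖ a b * Real.log (ϖ a b / (C a b * ω a * ω b)) + C a b * ω a * ω b - ϖ a b)
              - (if ϖ a b = 0 then C a b * ω a * ω b else 0) * Real.exp (-(n : ℝ))) := by
          rw [hH, hS]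
          simp only [Finset.sum_sub_distrib, Finset.sum_mul]
        rw [hRe, ← Finset.sum_add_distrib]
        apply Finset.sum_congr rfl; intro a _
        rw [← Finset.sum_add_distrib]
        apply Finset.sum_congr rfl; intro b _
        by_cases hz : ϖ a b = 0
        · simp only [hgfun, hz, if_pos, zero_mul, Real.log_zero, zero_div]
          simp [hz]
          ring
        · have hPpos : 0 < C a b * ω a * ω b :=
            (hP0 a b).lt_of_ne (fun h => hz (hac (a, b) h.symm))
          have hϖpos : 0 < ϖ a b := (hϖ0 a b).lt_of_ne (Ne.symm hz)
          simp only [hgfun, if_neg hz]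
          rw [Real.exp_log (div_pos hϖpos hPpos)]
          field_simp
          linear_combination (-ϖ a b) * mul_inv_cancel₀ hPpos.ne'
      have hle : ∀ n : ℕ, ((H - S * Real.exp (-(n : ℝ)) : ℝ) : EReal) ≤
          ⨆ g : {g : 𝒳 → 𝒳 → ℝ // ∀ a b, g a b = g b a},
            (((∑ a, ∑ b, ϖ a b * g.1 a b +
                ∑ a, ∑ b, C a b * ω a * ω b * (1 - Real.exp (g.1 a b))) : ℝ) : EReal) := by
        intro n
        rw [← hval n]
        exact le_iSup (fun g : {g : 𝒳 → 𝒳 → ℝ // ∀ a b, g a b = g b a} =>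
            (((∑ a, ∑ b, ϖ a b * g.1 a b +
                ∑ a, ∑ b, C a b * ω a * ω b * (1 - Real.exp (g.1 a b))) : ℝ) : EReal))
          ⟨gfun n, hgsym n⟩
      have htend : Tendsto (fun n : ℕ => ((H - S * Real.exp (-(n : ℝ)) : ℝ) : EReal))
          atTop (𝓝 (H : EReal)) := by
        rw [EReal.tendsto_coe]
        have h0 : Tendsto (fun n : ℕ => Real.exp (-(n : ℝ))) atTop (𝓝 0) :=
          Real.tendsto_exp_neg_atTop_nhds_zero.comp tendsto_natCast_atTop_atTop
        have := tendsto_const_nhds (x := H) (f := atTop (α := ℕ)) |>.sub (h0.const_mul S)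
        simpa using this
      exact le_of_tendsto htend (Eventually.of_forall hle)
  · -- not absolutely continuous
    push_neg at hac
    obtain ⟨q, hq0, hqne⟩ := hac
    have hϖpos : 0 < ϖ q.1 q.2 := (hϖ0 q.1 q.2).lt_of_ne (Ne.symm hqne)
    have hRHS : hC C ϖ ω = ⊤ := by
      rw [hC, relEntFin, if_neg (by push_neg; exact ⟨q, hq0, hqne⟩)]
      rw [EReal.top_add_coe, EReal.top_sub_coe]
    rw [hRHS, iSup_eq_top]
    intro y hy
    obtain ⟨x, hyx, -⟩ := EReal.exists_between_coe_real hy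
    set t : ℝ := max 0 ((x + 1) / ϖ q.1 q.2) with htdef
    have ht0 : 0 ≤ t := le_max_left _ _
    set g : 𝒳 → 𝒳 → ℝ := fun a b =>
        if (a = q.1 ∧ b = q.2) ∨ (a = q.2 ∧ b = q.1) then t else 0 with hg
    have hgsym : ∀ a b, g a b = g b a := by
      intro a b
      rw [hg]
      simp only
      apply if_congr _ rfl rfl
      tauto
    refine ⟨⟨g, hgsym⟩, lt_of_lt_of_le hyx (EReal.coe_le_coe_iff.mpr ?_)⟩
    have hgnn : ∀ a b, 0 ≤ g a b := by
      intro a b; rw [hg]; simp only; split_ifs <;> simp [ht0]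
    have hCsum : ∑ a, ∑ b, C a b * ω a * ω b * (1 - Real.exp (g a b)) = 0 := by
      apply Finset.sum_eq_zero; intro a _
      apply Finset.sum_eq_zero; intro b _
      rw [hg]
      simp only
      split_ifs with h
      · rcases h with ⟨ha, hb⟩ | ⟨ha, hb⟩
        · subst ha; subst hb; rw [hq0, zero_mul]
        · subst ha; subst hb; rw [hPsym, hq0, zero_mul]
      · simp
    have hgq : g q.1 q.2 = t := by rw [hg]; simp
    have hϖsum : ϖ q.1 q.2 * t ≤ ∑ a, ∑ b, ϖ a b * g a b := by
      have hinner : ϖ q.1 q.2 * t ≤ ∑ b, ϖ q.1 b * g q.1 b := by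
        rw [← hgq]
        exact Finset.single_le_sum (f := fun b => ϖ q.1 b * g q.1 b)
          (fun i _ => mul_nonneg (hϖ0 _ _) (hgnn _ _)) (Finset.mem_univ q.2)
      refine le_trans hinner (Finset.single_le_sum
        (f := fun a => ∑ b, ϖ a b * g a b) ?_ (Finset.mem_univ q.1))
      intro i _
      exact Finset.sum_nonneg fun b _ => mul_nonneg (hϖ0 _ _) (hgnn _ _)
    have hxt : x + 1 ≤ ϖ q.1 q.2 * t := by
      have := le_max_right 0 ((x + 1) / ϖ q.1 q.2)
      rw [div_le_iff₀ hϖpos] at this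
      calc x + 1 ≤ t * ϖ q.1 q.2 := this
        _ = ϖ q.1 q.2 * t := mul_comm _ _
    linarith [hϖsum, hCsum.ge, hCsum.le]


end ColoredLDP
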